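/- Let Λ be a probability measure on ℝ^d. For any n, any probability measures P₁, …, Pₙ on ℝ^d each satisfying φ_{P_i}(ω) ≠ 0 for Λ-almost every ω, and any real numbers α₁, …, αₙ, one has ∑_{i=1}^n ∑_{j=1}^n α_i α_j K(P_i, P_j) ≥ 0, where K(P,Q) = ∫ ⟨ (∫ ξ_ω dP)/‖∫ ξ_ω dP‖ , (∫ ξ_ω dQ)/‖∫ ξ_ω dQ‖ ⟩ dΛ(ω); that is, K is a positive definite kernel on probability measures whose characteristic functions are Λ-a.e. nonvanishing. -/

import Mathlib

open MeasureTheory RealInnerProductSpace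

/-- The characteristic function of a measure `P` on `ℝ^d`. -/
noncomputable def charFun {d : ℕ} (P : Measure (EuclideanSpace ℝ (Fin d)))
    (ω : EuclideanSpace ℝ (Fin d)) : ℂ :=
  ∫ x, Complex.exp (Complex.I * (⟪ω, x⟫ : ℝ)) ∂P

/-- The Fourier feature map `ξ_ω(x) = (cos⟨ω,x⟩, sin⟨ω,x⟩)`, valued in Euclidean `ℝ²`. -/
noncomputable def xi {d : ℕ} (ω x : EuclideanSpace ℝ (Fin d)) : EuclideanSpace ℝ (Fin 2) :=
  (WithLp.equiv 2 (Fin 2 → ℝ)).symm ![Real.cos (⟪ω, x⟫ : ℝ), Real.sin (⟪ω, x⟫ : ℝ)]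

/-- The mean Fourier feature `∫ ξ_ω dP ∈ ℝ²`. -/
noncomputable def meanFeat {d : ℕ} (P : Measure (EuclideanSpace ℝ (Fin d)))
    (ω : EuclideanSpace ℝ (Fin d)) : EuclideanSpace ℝ (Fin 2) :=
  ∫ x, xi ω x ∂P

/-- The kernel `K(P,Q) = ∫ ⟨∫ξ_ω dP/‖∫ξ_ω dP‖, ∫ξ_ω dQ/‖∫ξ_ω dQ‖⟩ dΛ(ω)`. -/
noncomputable def K {d : ℕ} (Λ : Measure (EuclideanSpace ℝ (Fin d)))
    (P Q : Measure (EuclideanSpace ℝ (Fin d))) : ℝ :=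
  ∫ ω, (⟪(‖meanFeat P ω‖)⁻¹ • meanFeat P ω, (‖meanFeat Q ω‖)⁻¹ • meanFeat Q ω⟫ : ℝ) ∂Λ

/-- `xi` is continuous in `ω` for fixed `x`. -/
lemma xi_cont₁ {d : ℕ} (x : EuclideanSpace ℝ (Fin d)) : Continuous fun ω => xi ω x := by
  unfold xi
  refine Continuous.comp (PiLp.continuous_toLp 2 (fun _ : Fin 2 => ℝ)) ?_
  apply continuous_pi
  intro i
  fin_cases i
  · exact Real.continuous_cos.comp (Continuous.inner continuous_id continuous_const)
  · exact Real.continuous_sin.comp (Continuous.inner continuous_id continuous_const)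

/-- `xi` is continuous in `x` for fixed `ω`. -/
lemma xi_cont₂ {d : ℕ} (ω : EuclideanSpace ℝ (Fin d)) : Continuous fun x => xi ω x := by
  unfold xi
  refine Continuous.comp (PiLp.continuous_toLp 2 (fun _ : Fin 2 => ℝ)) ?_
  apply continuous_pi
  intro i
  fin_cases i
  · exact Real.continuous_cos.comp (Continuous.inner continuous_const continuous_id)
  · exact Real.continuous_sin.comp (Continuous.inner continuous_const continuous_id)

lemma norm_xi {d : ℕ} (ω x : EuclideanSpace ℝ (Fin d)) : ‖xi ω x‖ = 1 := by
  rw [EuclideanSpace.norm_eq]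
  simp [xi, Fin.sum_univ_two, Real.sin_sq_add_cos_sq]

/-- The mean feature map is continuous in `ω` (dominated convergence). -/
lemma meanFeat_continuous {d : ℕ} (Q : Measure (EuclideanSpace ℝ (Fin d)))
    [IsProbabilityMeasure Q] : Continuous (meanFeat Q) := by
  apply continuous_of_dominated (bound := fun _ => (1:ℝ))
  · intro ω; exact (xi_cont₂ ω).aestronglyMeasurable
  · intro ω; filter_upwards with x; rw [norm_xi]
  · exact integrable_const 1
  · filter_upwards with x
    exact xi_cont₁ x

/-- The normalized mean feature. -/
noncomputable def uu {d : ℕ} (Q : Measure (EuclideanSpace ℝ (Fin d)))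
    (ω : EuclideanSpace ℝ (Fin d)) : EuclideanSpace ℝ (Fin 2) :=
  (‖meanFeat Q ω‖)⁻¹ • meanFeat Q ω

lemma uu_meas {d : ℕ} (Q : Measure (EuclideanSpace ℝ (Fin d)))
    [IsProbabilityMeasure Q] : Measurable (uu Q) := by
  have h := (meanFeat_continuous Q).measurable
  exact (h.norm.inv).smul h

lemma norm_uu_le {d : ℕ} (Q : Measure (EuclideanSpace ℝ (Fin d))) (ω) : ‖uu Q ω‖ ≤ 1 := by
  rw [uu, norm_smul, norm_inv, norm_norm]
  rcases eq_or_ne ‖meanFeat Q ω‖ 0 with h | h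
  · simp [h]
  · rw [inv_mul_cancel₀ h]

/-- `K` is a positive definite kernel on probability measures whose characteristic
functions are `Λ`-a.e. nonvanishing. -/
theorem stmt_10 {d : ℕ} (Λ : Measure (EuclideanSpace ℝ (Fin d))) [IsProbabilityMeasure Λ]
    (n : ℕ) (P : Fin n → Measure (EuclideanSpace ℝ (Fin d)))
    (hP : ∀ i, IsProbabilityMeasure (P i))
    (hφ : ∀ i, ∀ᵐ ω ∂Λ, _root_.charFun (P i) ω ≠ 0) (α : Fin n → ℝ) :
    0 ≤ ∑ i, ∑ j, α i * α j * K Λ (P i) (P j) := by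
  have hint : ∀ i j : Fin n, Integrable (fun ω => α i * α j * (⟪uu (P i) ω, uu (P j) ω⟫ : ℝ)) Λ := by
    intro i j
    haveI := hP i; haveI := hP j
    refine (Integrable.const_mul ?_ _)
    refine ⟨(((uu_meas (P i)).inner (uu_meas (P j))).aestronglyMeasurable), ?_⟩
    apply HasFiniteIntegral.of_bounded (C := 1)
    filter_upwards with ω
    calc ‖(⟪uu (P i) ω, uu (P j) ω⟫ : ℝ)‖ ≤ ‖uu (P i) ω‖ * ‖uu (P j) ω‖ :=
          abs_real_inner_le_norm _ _
      _ ≤ 1 * 1 :=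
          mul_le_mul (norm_uu_le _ _) (norm_uu_le _ _) (norm_nonneg _) zero_le_one
      _ = 1 := one_mul 1
  have hK : ∀ i j, α i * α j * K Λ (P i) (P j)
      = ∫ ω, α i * α j * (⟪uu (P i) ω, uu (P j) ω⟫ : ℝ) ∂Λ := by
    intro i j
    rw [K, ← integral_const_mul]
    rfl
  calc (0:ℝ) ≤ ∫ ω, (⟪∑ i, α i • uu (P i) ω, ∑ j, α j • uu (P j) ω⟫ : ℝ) ∂Λ :=
        integral_nonneg fun ω => real_inner_self_nonneg
    _ = ∫ ω, ∑ i, ∑ j, α i * α j * (⟪uu (P i) ω, uu (P j) ω⟫ : ℝ) ∂Λ := by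
        congr 1; funext ω
        rw [sum_inner]
        refine Finset.sum_congr rfl fun i _ => ?_
        rw [inner_sum]
        refine Finset.sum_congr rfl fun j _ => ?_
        rw [real_inner_smul_left, real_inner_smul_right]
        ring
    _ = ∑ i, ∑ j, α i * α j * K Λ (P i) (P j) := by
        rw [integral_finset_sum _ (fun i _ => integrable_finset_sum _ (fun j _ => hint i j))]
        refine Finset.sum_congr rfl fun i _ => ?_
        rw [integral_finset_sum _ (fun j _ => hint i j)]
        exact Finset.sum_congr rfl fun j _ => (hK i j).symm
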